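/- There exists a bipartite graph G with bipartition (A,B), with |A| ≥ |B| > 0, in which every vertex of A has degree at least five, such that G has no K_6 minor. Hence the hypothesis 'degree at least six' in the main theorem cannot be weakened to 'degree at least five'. -/

import Mathlib

open SimpleGraph Function

/-- `G` has a `K_t` minor: there are `t` nonempty, pairwise disjoint "branch sets",
each inducing a connected subgraph, with an edge of `G` between any two of them.
(This is the "`t`-cluster" formulation, equivalent to `K_t` being obtainable from a
subgraph of `G` by contracting edges.) -/
def HasCliqueMinor {V : Type*} (G : SimpleGraph V) (t : ℕ) : Prop :=
  ∃ f : Fin t → Set V,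
    (∀ i, (f i).Nonempty) ∧
    (∀ i, (G.induce (f i)).Connected) ∧
    (Pairwise fun i j => Disjoint (f i) (f j)) ∧
    ∀ i j, i ≠ j → ∃ u ∈ f i, ∃ v ∈ f j, G.Adj u v

/-- `(A, B)` is a bipartition of `G`: the parts partition the vertex set and
every edge joins `A` to `B`. -/
def IsBipartitionWith {V : Type*} (G : SimpleGraph V) (A B : Set V) : Prop :=
  (∀ v, v ∈ A ∨ v ∈ B) ∧ (∀ v, ¬(v ∈ A ∧ v ∈ B)) ∧
    ∀ ⦃u v⦄, G.Adj u v → (u ∈ A ↔ v ∈ B)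

/-- A candidate: a graph with a bipartition `(A,B)`, `|A| ≥ |B| > 0`, every vertex
of `A` of degree at least six, and no `K_6` minor. -/
def IsCandidate {V : Type*} (G : SimpleGraph V) (A B : Set V) : Prop :=
  IsBipartitionWith G A B ∧ B.ncard ≤ A.ncard ∧ B.Nonempty ∧
    (∀ a ∈ A, 6 ≤ (G.neighborSet a).ncard) ∧ ¬ HasCliqueMinor G 6

/-- A minimal candidate: a candidate minimizing `|V(G)| + |E(G)|` among all
(finite) candidates. -/
def IsMinimalCandidate {V : Type*} [Fintype V] (G : SimpleGraph V) (A B : Set V) : Prop :=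
  IsCandidate G A B ∧
    ∀ (n : ℕ) (G' : SimpleGraph (Fin n)) (A' B' : Set (Fin n)),
      IsCandidate G' A' B' →
        Fintype.card V + G.edgeSet.ncard ≤ n + G'.edgeSet.ncard


def adjN (u v : ℕ) : Bool :=
  let xy : ℕ → ℕ → Bool := fun a b => a < 12 && 12 ≤ b && b < 15 && !(b - 12 == a % 3)
  let xw : ℕ → ℕ → Bool := fun a b => a < 12 && 15 ≤ b && b < 23 && ((b-15)/2 == a/3)
  let xz : ℕ → ℕ → Bool := fun a b => a < 12 && b == 23
  xy u v || xy v u || xw u v || xw v u || xz u v || xz v u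

def GG : SimpleGraph (Fin 24) :=
  { Adj := fun u v => adjN u.val v.val = true
    symm := ⟨fun u v h => (by decide : ∀ a b : Fin 24, adjN a.val b.val = true → adjN b.val a.val = true) u v h⟩
    loopless := ⟨fun v h => (by decide : ∀ a : Fin 24, ¬ adjN a.val a.val = true) v h⟩ }

instance : DecidableRel GG.Adj := fun _ _ => inferInstanceAs (Decidable (_ = true))

def xv (c : Fin 4) (i : Fin 3) : Fin 24 := ⟨3*c.val+i.val, by omega⟩
def yv (t : Fin 3) : Fin 24 := ⟨12+t.val, by omega⟩
def wv (c : Fin 4) (s : Fin 2) : Fin 24 := ⟨15+2*c.val+s.val, by omega⟩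
def zv : Fin 24 := ⟨23, by omega⟩

def inY (v : Fin 24) : Prop := ∃ t, v = yv t
def inP (c : Fin 4) (v : Fin 24) : Prop := (∃ i, v = xv c i) ∨ (∃ s, v = wv c s)

instance (v) : Decidable (inY v) := by unfold inY; infer_instance
instance (c v) : Decidable (inP c v) := by unfold inP; infer_instance

lemma F1 : ∀ v : Fin 24, v ≠ zv → ¬ inY v → ∃ c, inP c v := by decide
lemma F2 : ∀ (c : Fin 4) (u v : Fin 24), inP c u → v ≠ zv → ¬ inY v → ¬ inP c v → ¬ GG.Adj u v := by decide
lemma F3 : ∀ (c c' : Fin 4) (u v : Fin 24), inP c u → inP c' v → GG.Adj u v → c = c' := by decide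
lemma F4 : ∀ (c : Fin 4) (v : Fin 24), inP c v → (∀ i, v ≠ xv c i) → v = wv c 0 ∨ v = wv c 1 := by decide
lemma F5 : ∀ (c : Fin 4), ¬ GG.Adj (wv c 0) (wv c 1) := by decide
lemma F6 : ∀ (c : Fin 4) (s : Fin 2) (u : Fin 24), GG.Adj u (wv c s) → ∃ i, u = xv c i := by decide
lemma F7 : ∀ (c : Fin 4) (u v : Fin 24), inP c v → GG.Adj u v → (∃ t, u = yv t) ∨ u = zv ∨ inP c u := by decide
lemma F8 : ∀ (c : Fin 4) (t : Fin 3) (s : Fin 2), ¬ GG.Adj (yv t) (wv c s) := by decide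
lemma F9 : ∀ (c : Fin 4) (t : Fin 3), ¬ GG.Adj (yv t) (xv c t) := by decide
lemma F10 : ∀ (c : Fin 4) (t i : Fin 3), GG.Adj (yv t) (xv c i) → t ≠ i := by decide
lemma F11 : ∀ (c : Fin 4) (u v : Fin 24), (∃ s, u = wv c s) → (¬ (∃ s, v = wv c s)) → (∀ i, v ≠ xv c i) → ¬ GG.Adj u v := by decide
lemma F12 : ∀ (c : Fin 4) (i : Fin 3), inP c (xv c i) := by decide
lemma F13 : ∀ (v : Fin 24), inY v → (¬ ∃ c s, v = wv c s) ∧ (∀ c i, v ≠ xv c i) ∧ v ≠ zv := by decide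
lemma yv_inj : ∀ t t' : Fin 3, yv t = yv t' → t = t' := by decide
lemma fin3_cover : ∀ i₁ i₂ i₃ t : Fin 3, i₁≠i₂ → i₁≠i₃ → i₂≠i₃ → t=i₁ ∨ t=i₂ ∨ t=i₃ := by decide
lemma fin3_four : ∀ a b c d : Fin 3, a=b ∨ a=c ∨ a=d ∨ b=c ∨ b=d ∨ c=d := by decide
lemma fin5_rest : ∀ a₁ a₂ : Fin 5, a₁ ≠ a₂ → ∃ b₁ b₂ b₃ : Fin 5, b₁≠b₂ ∧ b₁≠b₃ ∧ b₂≠b₃ ∧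
    b₁≠a₁ ∧ b₁≠a₂ ∧ b₂≠a₁ ∧ b₂≠a₂ ∧ b₃≠a₁ ∧ b₃≠a₂ := by decide
lemma fin5_rest2 : ∀ a₁ a₂ a₃ : Fin 5, a₁≠a₂ → a₁≠a₃ → a₂≠a₃ → ∃ b₁ b₂ : Fin 5, b₁≠b₂ ∧
    b₁≠a₁ ∧ b₁≠a₂ ∧ b₁≠a₃ ∧ b₂≠a₁ ∧ b₂≠a₂ ∧ b₂≠a₃ := by decide

lemma cross {X D₁ D₂ : Set (Fin 24)} (hdisj : ∀ v, v ∈ D₁ → v ∉ D₂)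
    (hsub : X ⊆ D₁ ∪ D₂)
    (hne : ∀ u v : Fin 24, u ∈ D₁ → v ∈ D₂ → ¬ GG.Adj u v)
    (hconn : (GG.induce X).Connected)
    {u v : Fin 24} (hu : u ∈ X) (hv : v ∈ X) (hu1 : u ∈ D₁) (hv2 : v ∈ D₂) : False := by
  obtain ⟨w⟩ := hconn.preconnected ⟨u, hu⟩ ⟨v, hv⟩
  suffices H : ∀ (a b : ↥X) (_ : (GG.induce X).Walk a b), a.1 ∈ D₁ → b.1 ∈ D₂ → False from
    H _ _ w hu1 hv2
  intro a b w
  induction w with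
  | nil => intro h1 h2; exact hdisj _ h1 h2
  | @cons p q r h w ih =>
    intro h1 h2
    by_cases hq : q.1 ∈ D₁
    · exact ih hq h2
    · have hq2 : q.1 ∈ D₂ := (hsub q.2).resolve_left hq
      exact hne _ _ h1 hq2 h

lemma drop_vertex {t : ℕ} (f : Fin (t+1) → Set (Fin 24)) (z : Fin 24)
    (hne : ∀ i, (f i).Nonempty) (hconn : ∀ i, (GG.induce (f i)).Connected)
    (hdisj : Pairwise fun i j => Disjoint (f i) (f j))
    (hadj : ∀ i j, i ≠ j → ∃ u ∈ f i, ∃ v ∈ f j, GG.Adj u v) :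
    ∃ g : Fin t → Set (Fin 24), (∀ i, (g i).Nonempty) ∧ (∀ i, (GG.induce (g i)).Connected) ∧
      (Pairwise fun i j => Disjoint (g i) (g j)) ∧
      (∀ i j, i ≠ j → ∃ u ∈ g i, ∃ v ∈ g j, GG.Adj u v) ∧ ∀ i, z ∉ g i := by
  classical
  by_cases h : ∃ i, z ∈ f i
  · refine ⟨fun a => f (h.choose.succAbove a), fun a => hne _, fun a => hconn _, ?_, ?_, ?_⟩
    · intro a b hab
      exact hdisj (fun e => hab (Fin.succAbove_right_injective e))
    · intro a b hab
      exact hadj _ _ (fun e => hab (Fin.succAbove_right_injective e))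
    · intro a hz
      exact Set.disjoint_left.mp (hdisj (Fin.succAbove_ne h.choose a)) hz h.choose_spec
  · refine ⟨fun a => f ((0 : Fin (t+1)).succAbove a), fun a => hne _, fun a => hconn _, ?_, ?_, ?_⟩
    · intro a b hab
      exact hdisj (fun e => hab (Fin.succAbove_right_injective e))
    · intro a b hab
      exact hadj _ _ (fun e => hab (Fin.succAbove_right_injective e))
    · intro a hz
      exact h ⟨_, hz⟩

lemma confine {X : Set (Fin 24)} (hX : (GG.induce X).Connected) (hz : zv ∉ X)
    (hY : ∀ v ∈ X, ¬ inY v) (hne : X.Nonempty) : ∃ c, ∀ v ∈ X, inP c v := by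
  obtain ⟨v₀, hv₀⟩ := hne
  have hv₀z : v₀ ≠ zv := fun e => hz (e ▸ hv₀)
  obtain ⟨c, hc⟩ := F1 v₀ hv₀z (hY v₀ hv₀)
  refine ⟨c, ?_⟩
  intro u hu
  by_contra hup
  have huz : u ≠ zv := fun e => hz (e ▸ hu)
  exact cross (D₁ := {v | inP c v}) (D₂ := {v | v ≠ zv ∧ ¬ inY v ∧ ¬ inP c v})
    (fun v h1 h2 => h2.2.2 h1)
    (fun w hw => by
      by_cases hwp : inP c w
      · exact Or.inl hwp
      · exact Or.inr ⟨fun e => hz (e ▸ hw), hY w hw, hwp⟩)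
    (fun u' v' h1 h2 => F2 c u' v' h1 h2.1 h2.2.1 h2.2.2)
    hX hv₀ hu hc ⟨huz, hY u hu, hup⟩

lemma w_imp_x {X : Set (Fin 24)} (hX : (GG.induce X).Connected) (c : Fin 4) (s : Fin 2)
    (hw : wv c s ∈ X) (hy : ∃ v ∈ X, inY v) (hnox : ∀ i, xv c i ∉ X) : False := by
  obtain ⟨y, hyX, hyY⟩ := hy
  have h13 := F13 y hyY
  refine cross (D₁ := {v | ∃ s', v = wv c s'}) (D₂ := {v | (¬ ∃ s', v = wv c s') ∧ ∀ i, v ≠ xv c i})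
    (fun v h1 h2 => h2.1 h1)
    (fun u hu => by
      by_cases h : ∃ s', u = wv c s'
      · exact Or.inl h
      · exact Or.inr ⟨h, fun i e => hnox i (e ▸ hu)⟩)
    (fun u' v' h1 h2 => F11 c u' v' h1 h2.1 h2.2)
    hX hw hyX ⟨s, rfl⟩ ⟨?_, ?_⟩
  · exact fun ⟨s', e⟩ => h13.1 ⟨c, s', e⟩
  · exact fun i => h13.2.1 c i

lemma F14 : ∀ c : Fin 4, wv c 0 ≠ wv c 1 := by decide
lemma fin5_others : ∀ a : Fin 5, ∃ b₁ b₂ b₃ b₄ : Fin 5, b₁≠b₂ ∧ b₁≠b₃ ∧ b₁≠b₄ ∧ b₂≠b₃ ∧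
    b₂≠b₄ ∧ b₃≠b₄ ∧ b₁≠a ∧ b₂≠a ∧ b₃≠a ∧ b₄≠a := by decide

lemma claimA (g : Fin 5 → Set (Fin 24))
    (gne : ∀ i, (g i).Nonempty)
    (gconn : ∀ i, (GG.induce (g i)).Connected)
    (gdisj : Pairwise fun i j => Disjoint (g i) (g j))
    (gadj : ∀ i j, i ≠ j → ∃ u ∈ g i, ∃ v ∈ g j, GG.Adj u v)
    (a : Fin 5) (c : Fin 4) (hsub : ∀ v ∈ g a, inP c v) : ∃ i, xv c i ∈ g a := by
  by_contra hno
  push_neg at hno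
  have hw : ∀ v ∈ g a, v = wv c 0 ∨ v = wv c 1 :=
    fun v hv => F4 c v (hsub v hv) (fun i e => hno i (e ▸ hv))
  obtain ⟨w0, hw0⟩ := gne a
  have hboth : wv c 0 ∈ g a → wv c 1 ∈ g a → False := by
    intro hA hB
    refine cross (D₁ := {v | v = wv c 0}) (D₂ := {v | v = wv c 1}) ?_ ?_ ?_ (gconn a) hA hB rfl rfl
    · intro v h1 h2
      rw [h1] at h2; exact F14 c h2
    · intro u hu
      exact hw u hu
    · intro u' v' h1 h2
      rw [h1, h2]; exact fun h => F5 c h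
  have honly : ∀ v ∈ g a, v = w0 := by
    intro v hv
    rcases hw v hv with h1 | h1 <;> rcases hw w0 hw0 with h2 | h2
    · rw [h1, h2]
    · exact absurd (fun x => hboth (h1 ▸ hv) (h2 ▸ hw0)) (fun h => h trivial)
    · exact absurd (fun x => hboth (h2 ▸ hw0) (h1 ▸ hv)) (fun h => h trivial)
    · rw [h1, h2]
  have hpart : ∀ b : Fin 5, b ≠ a → ∃ i, xv c i ∈ g b := by
    intro b hb
    obtain ⟨u, hu, v, hv, hadj'⟩ := gadj b a hb
    have hv0 : v = w0 := honly v hv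
    rcases hw w0 hw0 with h2 | h2
    · obtain ⟨i, hi⟩ := F6 c 0 u (by rw [hv0, h2] at hadj'; exact hadj')
      exact ⟨i, hi ▸ hu⟩
    · obtain ⟨i, hi⟩ := F6 c 1 u (by rw [hv0, h2] at hadj'; exact hadj')
      exact ⟨i, hi ▸ hu⟩
  obtain ⟨b₁,b₂,b₃,b₄,h12,h13,h14,h23,h24,h34,ha1,ha2,ha3,ha4⟩ := fin5_others a
  obtain ⟨i1, hi1⟩ := hpart b₁ ha1
  obtain ⟨i2, hi2⟩ := hpart b₂ ha2
  obtain ⟨i3, hi3⟩ := hpart b₃ ha3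
  obtain ⟨i4, hi4⟩ := hpart b₄ ha4
  rcases fin3_four i1 i2 i3 i4 with e|e|e|e|e|e
  · exact Set.disjoint_left.mp (gdisj h12) hi1 (e ▸ hi2)
  · exact Set.disjoint_left.mp (gdisj h13) hi1 (e ▸ hi3)
  · exact Set.disjoint_left.mp (gdisj h14) hi1 (e ▸ hi4)
  · exact Set.disjoint_left.mp (gdisj h23) hi2 (e ▸ hi3)
  · exact Set.disjoint_left.mp (gdisj h24) hi2 (e ▸ hi4)
  · exact Set.disjoint_left.mp (gdisj h34) hi3 (e ▸ hi4)

lemma xv_inj : ∀ (c : Fin 4) (i i' : Fin 3), xv c i = xv c i' → i = i' := by decide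

lemma GG_no_5 (g : Fin 5 → Set (Fin 24))
    (gne : ∀ i, (g i).Nonempty)
    (gconn : ∀ i, (GG.induce (g i)).Connected)
    (gdisj : Pairwise fun i j => Disjoint (g i) (g j))
    (gadj : ∀ i j, i ≠ j → ∃ u ∈ g i, ∃ v ∈ g j, GG.Adj u v)
    (gz : ∀ i, zv ∉ g i) : False := by
  classical
  have disj' : ∀ {e e' : Fin 5}, e ≠ e' → ∀ {v}, v ∈ g e → v ∈ g e' → False :=
    fun h _ hv hv' => Set.disjoint_left.mp (gdisj h) hv hv'
  set Yfree : Fin 5 → Prop := fun a => ∀ v ∈ g a, ¬ inY v with hYfree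
  have hget : ∀ b, ¬ Yfree b → ∃ v ∈ g b, inY v := by
    intro b hb
    by_contra h'
    push_neg at h'
    exact hb h'
  -- there are two Y-free branch sets
  have htwo : ∃ a₁ a₂, a₁ ≠ a₂ ∧ Yfree a₁ ∧ Yfree a₂ := by
    by_contra h
    push_neg at h
    have hfour : ∃ b₁ b₂ b₃ b₄ : Fin 5, b₁≠b₂ ∧ b₁≠b₃ ∧ b₁≠b₄ ∧ b₂≠b₃ ∧ b₂≠b₄ ∧ b₃≠b₄ ∧
        ¬ Yfree b₁ ∧ ¬ Yfree b₂ ∧ ¬ Yfree b₃ ∧ ¬ Yfree b₄ := by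
      by_cases hy0 : ∃ a, Yfree a
      · obtain ⟨a0, ha0⟩ := hy0
        obtain ⟨b₁,b₂,b₃,b₄,h12,h13,h14,h23,h24,h34,n1,n2,n3,n4⟩ := fin5_others a0
        exact ⟨b₁,b₂,b₃,b₄,h12,h13,h14,h23,h24,h34,
          fun hb => h b₁ a0 n1 hb ha0, fun hb => h b₂ a0 n2 hb ha0,
          fun hb => h b₃ a0 n3 hb ha0, fun hb => h b₄ a0 n4 hb ha0⟩
      · push_neg at hy0
        obtain ⟨b₁,b₂,b₃,b₄,h12,h13,h14,h23,h24,h34,_,_,_,_⟩ := fin5_others 0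
        exact ⟨b₁,b₂,b₃,b₄,h12,h13,h14,h23,h24,h34, hy0 b₁, hy0 b₂, hy0 b₃, hy0 b₄⟩
    obtain ⟨b₁,b₂,b₃,b₄,h12,h13,h14,h23,h24,h34,n1,n2,n3,n4⟩ := hfour
    obtain ⟨v₁, hv₁, t₁, rfl⟩ := hget b₁ n1
    obtain ⟨v₂, hv₂, t₂, rfl⟩ := hget b₂ n2
    obtain ⟨v₃, hv₃, t₃, rfl⟩ := hget b₃ n3
    obtain ⟨v₄, hv₄, t₄, rfl⟩ := hget b₄ n4
    rcases fin3_four t₁ t₂ t₃ t₄ with e|e|e|e|e|e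
    · exact disj' h12 (e ▸ hv₁) hv₂
    · exact disj' h13 (e ▸ hv₁) hv₃
    · exact disj' h14 (e ▸ hv₁) hv₄
    · exact disj' h23 (e ▸ hv₂) hv₃
    · exact disj' h24 (e ▸ hv₂) hv₄
    · exact disj' h34 (e ▸ hv₃) hv₄
  obtain ⟨a₁, a₂, ha12, hY1, hY2⟩ := htwo
  obtain ⟨c, hc₁⟩ := confine (gconn a₁) (gz a₁) hY1 (gne a₁)
  obtain ⟨c₂, hc₂⟩ := confine (gconn a₂) (gz a₂) hY2 (gne a₂)
  have hcc : c = c₂ := by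
    obtain ⟨u, hu, v, hv, hadj'⟩ := gadj a₁ a₂ ha12
    exact F3 c c₂ u v (hc₁ u hu) (hc₂ v hv) hadj'
  rw [← hcc] at hc₂
  clear hcc
  obtain ⟨i₁, hi1⟩ := claimA g gne gconn gdisj gadj a₁ c hc₁
  obtain ⟨i₂, hi2⟩ := claimA g gne gconn gdisj gadj a₂ c hc₂
  have d12 : i₁ ≠ i₂ := fun e => disj' ha12 (e ▸ hi1) hi2
  by_cases h3 : ∃ a₃, a₃ ≠ a₁ ∧ a₃ ≠ a₂ ∧ Yfree a₃
  · -- at least three Y-free sets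
    obtain ⟨a₃, h31, h32, hY3⟩ := h3
    obtain ⟨c₃, hc₃'⟩ := confine (gconn a₃) (gz a₃) hY3 (gne a₃)
    have hcc3 : c₃ = c := by
      obtain ⟨u, hu, v, hv, hadj'⟩ := gadj a₃ a₁ h31
      exact F3 c₃ c u v (hc₃' u hu) (hc₁ v hv) hadj'
    rw [hcc3] at hc₃'
    have hc₃ := hc₃'
    obtain ⟨i₃, hi3⟩ := claimA g gne gconn gdisj gadj a₃ c hc₃
    have d13 : i₁ ≠ i₃ := fun e => disj' h31.symm (e ▸ hi1) hi3
    have d23 : i₂ ≠ i₃ := fun e => disj' h32.symm (e ▸ hi2) hi3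
    by_cases h4 : ∃ a₄, a₄ ≠ a₁ ∧ a₄ ≠ a₂ ∧ a₄ ≠ a₃ ∧ Yfree a₄
    · -- four Y-free sets: pigeonhole on x-indices
      obtain ⟨a₄, h41, h42, h43, hY4⟩ := h4
      obtain ⟨c₄, hc₄'⟩ := confine (gconn a₄) (gz a₄) hY4 (gne a₄)
      have hcc4 : c₄ = c := by
        obtain ⟨u, hu, v, hv, hadj'⟩ := gadj a₄ a₁ h41
        exact F3 c₄ c u v (hc₄' u hu) (hc₁ v hv) hadj'
      rw [hcc4] at hc₄'
      obtain ⟨i₄, hi4⟩ := claimA g gne gconn gdisj gadj a₄ c hc₄'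
      rcases fin3_four i₁ i₂ i₃ i₄ with e|e|e|e|e|e
      · exact disj' ha12 (e ▸ hi1) hi2
      · exact disj' h31.symm (e ▸ hi1) hi3
      · exact disj' h41.symm (e ▸ hi1) hi4
      · exact disj' h32.symm (e ▸ hi2) hi3
      · exact disj' h42.symm (e ▸ hi2) hi4
      · exact disj' h43.symm (e ▸ hi3) hi4
    · -- exactly three Y-free sets
      push_neg at h4
      obtain ⟨b₁,b₂,hb12,hb1a₁,hb1a₂,hb1a₃,hb2a₁,hb2a₂,hb2a₃⟩ :=
        fin5_rest2 a₁ a₂ a₃ ha12 h31.symm h32.symm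
      have nY1 : ¬ Yfree b₁ := h4 b₁ hb1a₁ hb1a₂ hb1a₃
      have nY2 : ¬ Yfree b₂ := h4 b₂ hb2a₁ hb2a₂ hb2a₃
      obtain ⟨v₁, hv₁, τ₁, rfl⟩ := hget b₁ nY1
      obtain ⟨v₂, hv₂, τ₂, rfl⟩ := hget b₂ nY2
      have dτ : τ₁ ≠ τ₂ := fun e => disj' hb12 (e ▸ hv₁) hv₂
      have noxU : ∀ (b : Fin 5), b≠a₁→b≠a₂→b≠a₃ → ∀ j, xv c j ∉ g b := by
        intro b m1 m2 m3 j hj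
        rcases fin3_cover i₁ i₂ i₃ j d12 d13 d23 with e|e|e
        · exact disj' m1 (e ▸ hj) hi1
        · exact disj' m2 (e ▸ hj) hi2
        · exact disj' m3 (e ▸ hj) hi3
      have nowU : ∀ (b : Fin 5), b≠a₁→b≠a₂→b≠a₃ → (∃ v ∈ g b, inY v) → ∀ s', wv c s' ∉ g b := by
        intro b m1 m2 m3 hyb s' hw
        exact (w_imp_x (gconn b) c s' hw hyb (fun i => noxU b m1 m2 m3 i)).elim
      have key : ∀ (b : Fin 5), b≠a₁→b≠a₂→b≠a₃ → (∃ v ∈ g b, inY v) →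
          ∀ τ, (∀ v ∈ g b, inY v → v = yv τ) → False := by
        intro b m1 m2 m3 hyb τ hexact
        have inner : ∀ (am : Fin 5), b ≠ am → (∀ v ∈ g am, inP c v) →
            (∀ i, xv c i ∈ g am → i = τ) → False := by
          intro am nbam hcm hxonly
          obtain ⟨u, hu, v, hv, hadj'⟩ := gadj b am nbam
          rcases F7 c u v (hcm v hv) hadj' with ⟨t, ht⟩ | hz' | hPu
          · have hu' : u = yv τ := hexact u hu ⟨t, ht⟩
            subst hu'
            rcases hcm v hv with ⟨i, hvi⟩ | ⟨s, hvs⟩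
            · subst hvi
              have : i = τ := hxonly i hv
              subst this
              exact F9 c i hadj'
            · rw [hvs] at hadj'
              exact F8 c τ s hadj'
          · exact gz b (hz' ▸ hu)
          · rcases hPu with ⟨j, hj⟩ | ⟨s', hs'⟩
            · exact noxU b m1 m2 m3 j (hj ▸ hu)
            · exact nowU b m1 m2 m3 hyb s' (hs' ▸ hu)
        rcases fin3_cover i₁ i₂ i₃ τ d12 d13 d23 with e|e|e
        · refine inner a₁ m1 hc₁ ?_
          intro i hi
          rcases fin3_cover i₁ i₂ i₃ i d12 d13 d23 with e'|e'|e'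
          · rw [e', ← e]
          · exact (disj' ha12 (e' ▸ hi) hi2).elim
          · exact (disj' h31.symm (e' ▸ hi) hi3).elim
        · refine inner a₂ m2 hc₂ ?_
          intro i hi
          rcases fin3_cover i₁ i₂ i₃ i d12 d13 d23 with e'|e'|e'
          · exact (disj' ha12.symm (e' ▸ hi) hi1).elim
          · rw [e', ← e]
          · exact (disj' h32.symm (e' ▸ hi) hi3).elim
        · refine inner a₃ m3 hc₃ ?_
          intro i hi
          rcases fin3_cover i₁ i₂ i₃ i d12 d13 d23 with e'|e'|e'
          · exact (disj' h31 (e' ▸ hi) hi1).elim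
          · exact (disj' h32 (e' ▸ hi) hi2).elim
          · rw [e', ← e]
      by_cases hstar₁ : ∀ v ∈ g b₁, inY v → v = yv τ₁
      · exact key b₁ hb1a₁ hb1a₂ hb1a₃ ⟨yv τ₁, hv₁, τ₁, rfl⟩ τ₁ hstar₁
      · push_neg at hstar₁
        obtain ⟨v₁', hv₁', hY₁', hne₁'⟩ := hstar₁
        obtain ⟨τ₁', rfl⟩ := hY₁'
        have dτ₁ : τ₁' ≠ τ₁ := fun e => hne₁' (by rw [e])
        by_cases hstar₂ : ∀ v ∈ g b₂, inY v → v = yv τ₂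
        · exact key b₂ hb2a₁ hb2a₂ hb2a₃ ⟨yv τ₂, hv₂, τ₂, rfl⟩ τ₂ hstar₂
        · push_neg at hstar₂
          obtain ⟨v₂', hv₂', hY₂', hne₂'⟩ := hstar₂
          obtain ⟨τ₂', rfl⟩ := hY₂'
          have dτ₂ : τ₂' ≠ τ₂ := fun e => hne₂' (by rw [e])
          rcases fin3_four τ₁ τ₁' τ₂ τ₂' with e|e|e|e|e|e
          · exact dτ₁ e.symm
          · exact disj' hb12 (e ▸ hv₁) hv₂
          · exact disj' hb12 (e ▸ hv₁) hv₂'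
          · exact disj' hb12 (e ▸ hv₁') hv₂
          · exact disj' hb12 (e ▸ hv₁') hv₂'
          · exact dτ₂ e.symm
  · -- exactly two Y-free sets
    push_neg at h3
    obtain ⟨b₁,b₂,b₃,hb12,hb13,hb23,hb1a₁,hb1a₂,hb2a₁,hb2a₂,hb3a₁,hb3a₂⟩ := fin5_rest a₁ a₂ ha12
    obtain ⟨v₁, hv₁, τ₁, rfl⟩ := hget b₁ (h3 b₁ hb1a₁ hb1a₂)
    obtain ⟨v₂, hv₂, τ₂, rfl⟩ := hget b₂ (h3 b₂ hb2a₁ hb2a₂)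
    obtain ⟨v₃, hv₃, τ₃, rfl⟩ := hget b₃ (h3 b₃ hb3a₁ hb3a₂)
    have dτ12 : τ₁ ≠ τ₂ := fun e => disj' hb12 (e ▸ hv₁) hv₂
    have dτ13 : τ₁ ≠ τ₃ := fun e => disj' hb13 (e ▸ hv₁) hv₃
    have dτ23 : τ₂ ≠ τ₃ := fun e => disj' hb23 (e ▸ hv₂) hv₃
    have hex₁ : ∀ v ∈ g b₁, inY v → v = yv τ₁ := by
      rintro v hv ⟨t, rfl⟩
      rcases fin3_cover τ₁ τ₂ τ₃ t dτ12 dτ13 dτ23 with e|e|e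
      · rw [e]
      · exact (disj' hb12 (e ▸ hv) hv₂).elim
      · exact (disj' hb13 (e ▸ hv) hv₃).elim
    have hex₂ : ∀ v ∈ g b₂, inY v → v = yv τ₂ := by
      rintro v hv ⟨t, rfl⟩
      rcases fin3_cover τ₁ τ₂ τ₃ t dτ12 dτ13 dτ23 with e|e|e
      · exact (disj' hb12.symm (e ▸ hv) hv₁).elim
      · rw [e]
      · exact (disj' hb23 (e ▸ hv) hv₃).elim
    have hex₃ : ∀ v ∈ g b₃, inY v → v = yv τ₃ := by
      rintro v hv ⟨t, rfl⟩
      rcases fin3_cover τ₁ τ₂ τ₃ t dτ12 dτ13 dτ23 with e|e|e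
      · exact (disj' hb13.symm (e ▸ hv) hv₁).elim
      · exact (disj' hb23.symm (e ▸ hv) hv₂).elim
      · rw [e]
    have main : ∀ (am bs : Fin 5) (im : Fin 3), bs ≠ am → (∀ v ∈ g am, inP c v) →
        (∀ v ∈ g bs, inY v → v = yv im) → (∃ v ∈ g bs, inY v) →
        (∃ i, i ≠ im ∧ xv c i ∈ g am) ∨ (∃ j, xv c j ∈ g bs) := by
      intro am bs im hne' hcm hexact hyb
      obtain ⟨u, hu, v, hv, hadj'⟩ := gadj bs am hne'
      rcases F7 c u v (hcm v hv) hadj' with ⟨t, ht⟩ | hz' | hPu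
      · have hu' : u = yv im := hexact u hu ⟨t, ht⟩
        subst hu'
        rcases hcm v hv with ⟨i, hvi⟩ | ⟨s, hvs⟩
        · subst hvi
          exact Or.inl ⟨i, Ne.symm (F10 c im i hadj'), hv⟩
        · rw [hvs] at hadj'
          exact (F8 c im s hadj').elim
      · exact ((gz bs) (hz' ▸ hu)).elim
      · rcases hPu with ⟨j, hj⟩ | ⟨s', hs'⟩
        · exact Or.inr ⟨j, hj ▸ hu⟩
        · by_cases hx' : ∃ j, xv c j ∈ g bs
          · exact Or.inr hx'
          · push_neg at hx'
            exact (w_imp_x (gconn bs) c s' (hs' ▸ hu) hyb hx').elim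
    have findb : ∀ im : Fin 3, ∃ bs, bs ≠ a₁ ∧ bs ≠ a₂ ∧ (yv im ∈ g bs) ∧
        (∀ v ∈ g bs, inY v → v = yv im) ∧ (∃ v ∈ g bs, inY v) := by
      intro im
      rcases fin3_cover τ₁ τ₂ τ₃ im dτ12 dτ13 dτ23 with e|e|e
      · exact ⟨b₁, hb1a₁, hb1a₂, by rw [e]; exact hv₁, by rw [e]; exact hex₁, ⟨yv τ₁, hv₁, τ₁, rfl⟩⟩
      · exact ⟨b₂, hb2a₁, hb2a₂, by rw [e]; exact hv₂, by rw [e]; exact hex₂, ⟨yv τ₂, hv₂, τ₂, rfl⟩⟩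
      · exact ⟨b₃, hb3a₁, hb3a₂, by rw [e]; exact hv₃, by rw [e]; exact hex₃, ⟨yv τ₃, hv₃, τ₃, rfl⟩⟩
    obtain ⟨bs₁, hbs₁a₁, hbs₁a₂, hybs₁, hexs₁, hys₁⟩ := findb i₁
    obtain ⟨bs₂, hbs₂a₁, hbs₂a₂, hybs₂, hexs₂, hys₂⟩ := findb i₂
    have hbsne : bs₁ ≠ bs₂ := by
      intro e
      exact d12 (yv_inj i₁ i₂ (hexs₂ (yv i₁) (e ▸ hybs₁) ⟨i₁, rfl⟩))
    rcases main a₁ bs₁ i₁ hbs₁a₁ hc₁ hexs₁ hys₁ with ⟨i₁', hne₁, hx₁'⟩ | ⟨j₁, hj₁⟩ <;>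
      rcases main a₂ bs₂ i₂ hbs₂a₂ hc₂ hexs₂ hys₂ with ⟨i₂', hne₂, hx₂'⟩ | ⟨j₂, hj₂⟩
    · rcases fin3_four i₁ i₂ i₁' i₂' with e|e|e|e|e|e
      · exact d12 e
      · exact hne₁ e.symm
      · exact disj' ha12 (e ▸ hi1) hx₂'
      · exact disj' ha12.symm (e ▸ hi2) hx₁'
      · exact hne₂ e.symm
      · exact disj' ha12 (e ▸ hx₁') hx₂'
    · rcases fin3_four i₁ i₂ i₁' j₂ with e|e|e|e|e|e
      · exact d12 e
      · exact hne₁ e.symm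
      · exact disj' (Ne.symm hbs₂a₁) (e ▸ hi1) hj₂
      · exact disj' ha12.symm (e ▸ hi2) hx₁'
      · exact disj' (Ne.symm hbs₂a₂) (e ▸ hi2) hj₂
      · exact disj' (Ne.symm hbs₂a₁) (e ▸ hx₁') hj₂
    · rcases fin3_four i₁ i₂ j₁ i₂' with e|e|e|e|e|e
      · exact d12 e
      · exact disj' (Ne.symm hbs₁a₁) (e ▸ hi1) hj₁
      · exact disj' ha12 (e ▸ hi1) hx₂'
      · exact disj' (Ne.symm hbs₁a₂) (e ▸ hi2) hj₁
      · exact hne₂ e.symm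
      · exact disj' hbs₁a₂ (e ▸ hj₁) hx₂'
    · rcases fin3_four i₁ i₂ j₁ j₂ with e|e|e|e|e|e
      · exact d12 e
      · exact disj' (Ne.symm hbs₁a₁) (e ▸ hi1) hj₁
      · exact disj' (Ne.symm hbs₂a₁) (e ▸ hi1) hj₂
      · exact disj' (Ne.symm hbs₁a₂) (e ▸ hi2) hj₁
      · exact disj' (Ne.symm hbs₂a₂) (e ▸ hi2) hj₂
      · exact disj' hbsne (e ▸ hj₁) hj₂

lemma GG_noK6 : ¬ HasCliqueMinor GG 6 := by
  rintro ⟨f, hne, hconn, hdisj, hadj⟩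
  obtain ⟨g, gne, gconn, gdisj, gadj, gz⟩ := drop_vertex (t := 5) f zv hne hconn hdisj hadj
  exact GG_no_5 g gne gconn gdisj gadj gz

theorem exists_bipartite_minDegFive_noK6Minor :
    ∃ (n : ℕ) (G : SimpleGraph (Fin n)) (A B : Set (Fin n)),
      IsBipartitionWith G A B ∧ B.ncard ≤ A.ncard ∧ B.Nonempty ∧
        (∀ a ∈ A, 5 ≤ (G.neighborSet a).ncard) ∧ ¬ HasCliqueMinor G 6 := by
  refine ⟨24, GG, {v | v.val < 12}, {v | 12 ≤ v.val}, ⟨?_, ?_, ?_⟩, ?_, ?_, ?_, GG_noK6⟩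
  · intro v
    by_cases h : v.val < 12
    · exact Or.inl h
    · exact Or.inr (show (12:ℕ) ≤ v.val by omega)
  · rintro v ⟨h1, h2⟩
    simp only [Set.mem_setOf_eq] at h1 h2
    omega
  · intro u v huv
    exact (by decide : ∀ u v : Fin 24, GG.Adj u v → ((u.val < 12) ↔ (12 ≤ v.val))) u v huv
  · have e1 : ({v : Fin 24 | v.val < 12} : Set (Fin 24)) =
        ↑(Finset.filter (fun v : Fin 24 => v.val < 12) Finset.univ) := by
      ext v; simp
    have e2 : ({v : Fin 24 | 12 ≤ v.val} : Set (Fin 24)) =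
        ↑(Finset.filter (fun v : Fin 24 => 12 ≤ v.val) Finset.univ) := by
      ext v; simp
    rw [e1, e2, Set.ncard_coe_finset, Set.ncard_coe_finset]
    decide
  · exact ⟨zv, show (12:ℕ) ≤ zv.val by decide⟩
  · intro a ha
    have hnb : GG.neighborSet a = ↑(Finset.univ.filter (fun v => GG.Adj a v)) := by
      ext v; simp [SimpleGraph.mem_neighborSet]
    rw [hnb, Set.ncard_coe_finset]
    exact (by decide : ∀ a : Fin 24, a.val < 12 →
      5 ≤ (Finset.univ.filter (fun v => GG.Adj a v)).card) a ha
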